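/- arXiv:1406.2454 — 5 statements merged into one kernel-verified Lean document; each statement's English description precedes it below -/
import Mathlib

section
/- If the points p₁, …, p_N ∈ ℝ² are not all equal and vᵢ > 0 for all i, then the zero-time plane P = ℝ² × {0} and the intersection ⋂ᵢ Cᵢ of the cones Cᵢ = {(x,t) : t ≥ ‖x - pᵢ‖/vᵢ} are disjoint, and the distance between them is strictly positive. -/
theorem stmt_5 {ι : Type*} [Fintype ι] [Nonempty ι]
    (p : ι → EuclideanSpace ℝ (Fin 2)) (v : ι → ℝ) (hv : ∀ i, 0 < v i)
    (hne : ∃ i j, p i ≠ p j) :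
    Disjoint {z : WithLp 2 (EuclideanSpace ℝ (Fin 2) × ℝ) | z.ofLp.2 = 0}
      (⋂ i, {z : WithLp 2 (EuclideanSpace ℝ (Fin 2) × ℝ) | ‖z.ofLp.1 - p i‖ / v i ≤ z.ofLp.2}) ∧
    0 < sInf {d : ℝ | ∃ a ∈ {z : WithLp 2 (EuclideanSpace ℝ (Fin 2) × ℝ) | z.ofLp.2 = 0},
        ∃ b ∈ ⋂ i, {z : WithLp 2 (EuclideanSpace ℝ (Fin 2) × ℝ) | ‖z.ofLp.1 - p i‖ / v i ≤ z.ofLp.2},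
        d = dist a b} := by
  obtain ⟨i, j, hij⟩ := hne
  set V : ℝ := max (v i) (v j) with hV
  have hV0 : 0 < V := lt_max_of_lt_left (hv i)
  set c : ℝ := ‖p i - p j‖ / (2 * V) with hc
  have hc0 : 0 < c := div_pos (norm_pos_iff.mpr (sub_ne_zero.mpr hij)) (by linarith)
  -- lower bound on the time coordinate of points of the intersection
  have key : ∀ z : WithLp 2 (EuclideanSpace ℝ (Fin 2) × ℝ),
      (z ∈ ⋂ i, {z : WithLp 2 (EuclideanSpace ℝ (Fin 2) × ℝ) | ‖z.ofLp.1 - p i‖ / v i ≤ z.ofLp.2}) →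
      c ≤ z.ofLp.2 := by
    intro z hz
    simp only [Set.mem_iInter, Set.mem_setOf_eq] at hz
    have hi := hz i
    have hj := hz j
    have h1 : ‖z.ofLp.1 - p i‖ / V ≤ z.ofLp.2 :=
      le_trans (div_le_div_of_nonneg_left (norm_nonneg _) (hv i) (le_max_left _ _)) hi
    have h2 : ‖z.ofLp.1 - p j‖ / V ≤ z.ofLp.2 :=
      le_trans (div_le_div_of_nonneg_left (norm_nonneg _) (hv j) (le_max_right _ _)) hj
    have htri : ‖p i - p j‖ ≤ ‖z.ofLp.1 - p j‖ + ‖z.ofLp.1 - p i‖ := by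
      have := norm_sub_le (z.ofLp.1 - p j) (z.ofLp.1 - p i)
      simpa [norm_sub_rev, sub_sub_sub_cancel_left] using this
    rw [div_le_iff₀ hV0] at h1 h2
    rw [hc, div_le_iff₀ (by linarith : (0:ℝ) < 2 * V)]
    nlinarith
  constructor
  · rw [Set.disjoint_left]
    intro z hz0 hz
    have := key z hz
    simp only [Set.mem_setOf_eq] at hz0
    rw [hz0] at this
    linarith
  · -- the set of distances is nonempty and bounded below by c
    set S := {d : ℝ | ∃ a ∈ {z : WithLp 2 (EuclideanSpace ℝ (Fin 2) × ℝ) | z.ofLp.2 = 0},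
        ∃ b ∈ ⋂ i, {z : WithLp 2 (EuclideanSpace ℝ (Fin 2) × ℝ) | ‖z.ofLp.1 - p i‖ / v i ≤ z.ofLp.2},
        d = dist a b} with hS
    have hSne : S.Nonempty := by
      obtain ⟨T, hT⟩ := Finset.exists_le (Finset.univ.image (fun k => ‖(p i : EuclideanSpace ℝ (Fin 2)) - p k‖ / v k))
      set T' : ℝ := max T 0 with hT'
      set a0 : WithLp 2 (EuclideanSpace ℝ (Fin 2) × ℝ) := (WithLp.equiv 2 _).symm (p i, 0)
      set b0 : WithLp 2 (EuclideanSpace ℝ (Fin 2) × ℝ) := (WithLp.equiv 2 _).symm (p i, T')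
      refine ⟨dist a0 b0, a0, rfl, b0, ?_, rfl⟩
      simp only [Set.mem_iInter, Set.mem_setOf_eq]
      intro k
      show ‖p i - p k‖ / v k ≤ T'
      exact le_max_of_le_left (hT _ (Finset.mem_image_of_mem _ (Finset.mem_univ k)))
    refine lt_of_lt_of_le hc0 (le_csInf hSne ?_)
    rintro d ⟨a, ha, b, hb, rfl⟩
    simp only [Set.mem_setOf_eq] at ha
    have hb2 := key b hb
    have : dist a.ofLp.2 b.ofLp.2 ≤ dist a b := by
      rw [WithLp.prod_dist_eq_of_L2]
      have h1 : dist a.ofLp.2 b.ofLp.2 ^ 2 ≤ dist a.ofLp.1 b.ofLp.1 ^ 2 + dist a.ofLp.2 b.ofLp.2 ^ 2 :=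
        le_add_of_nonneg_left (by positivity)
      calc dist a.ofLp.2 b.ofLp.2 = √(dist a.ofLp.2 b.ofLp.2 ^ 2) := by
            rw [Real.sqrt_sq dist_nonneg]
        _ ≤ _ := Real.sqrt_le_sqrt h1
    have : dist a.ofLp.2 b.ofLp.2 ≥ c := by
      rw [ha, Real.dist_eq]
      calc c ≤ b.ofLp.2 := hb2
        _ ≤ |0 - b.ofLp.2| := by rw [zero_sub, abs_neg]; exact le_abs_self _
    linarith
end

section
/- If the points p₁, …, p_N ∈ ℝ² are not all equal, then the function x ↦ maxᵢ ‖x - pᵢ‖/vᵢ has a unique minimizer on ℝ². -/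
theorem stmt_7 {ι : Type*} [Fintype ι] [Nonempty ι]
    (p : ι → EuclideanSpace ℝ (Fin 2)) (v : ι → ℝ) (hv : ∀ i, 0 < v i)
    (hne : ∃ i j, p i ≠ p j) :
    ∃! xstar : EuclideanSpace ℝ (Fin 2), ∀ x : EuclideanSpace ℝ (Fin 2),
      Finset.univ.sup' Finset.univ_nonempty (fun i => ‖xstar - p i‖ / v i)
        ≤ Finset.univ.sup' Finset.univ_nonempty (fun i => ‖x - p i‖ / v i) := by
  set f : EuclideanSpace ℝ (Fin 2) → ℝ :=
    fun x => Finset.univ.sup' Finset.univ_nonempty (fun i => ‖x - p i‖ / v i) with hfdef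
  obtain ⟨i₀⟩ := ‹Nonempty ι›
  have hcont : Continuous f := by
    apply Continuous.finset_sup'_apply
    intro i _
    exact (continuous_id.sub continuous_const).norm.div_const _
  have hle : ∀ x i, ‖x - p i‖ / v i ≤ f x := fun x i =>
    Finset.le_sup' (fun i => ‖x - p i‖ / v i) (Finset.mem_univ i)
  have hc0 : 0 ≤ f (p i₀) := le_trans (div_nonneg (norm_nonneg _) (hv i₀).le) (hle (p i₀) i₀)
  set K := Metric.closedBall (p i₀) (f (p i₀) * v i₀) with hKdef
  have hKmem : p i₀ ∈ K := Metric.mem_closedBall_self (mul_nonneg hc0 (hv i₀).le)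
  obtain ⟨x₀, hx₀K, hmin⟩ := (isCompact_closedBall _ _).exists_isMinOn ⟨_, hKmem⟩
    hcont.continuousOn
  have hglobal : ∀ x, f x₀ ≤ f x := by
    intro x
    by_cases hx : x ∈ K
    · exact hmin hx
    · have h1 : f (p i₀) * v i₀ < dist x (p i₀) := by
        simpa [hKdef, Metric.mem_closedBall, not_le] using hx
      have h2 : f (p i₀) < ‖x - p i₀‖ / v i₀ := by
        rw [lt_div_iff₀ (hv i₀)]
        simpa [dist_eq_norm] using h1
      exact le_trans (hmin hKmem) (le_of_lt (lt_of_lt_of_le h2 (hle x i₀)))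
  refine ⟨x₀, hglobal, ?_⟩
  intro y hy
  -- y is also a global minimizer
  have hyg : ∀ x, f y ≤ f x := hy
  have hm : f y = f x₀ := le_antisymm (hyg x₀) (hglobal y)
  set m := f x₀ with hmdef
  set z : EuclideanSpace ℝ (Fin 2) := (2:ℝ)⁻¹ • (y + x₀) with hzdef
  have hbound : ∀ i, ‖y - p i‖ ≤ m * v i := by
    intro i
    have : ‖y - p i‖ / v i ≤ m := le_trans (hle y i) (le_of_eq hm)
    calc ‖y - p i‖ = ‖y - p i‖ / v i * v i := (div_mul_cancel₀ _ (hv i).ne').symm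
      _ ≤ m * v i := mul_le_mul_of_nonneg_right this (le_of_lt (hv i))
  have hbound' : ∀ i, ‖x₀ - p i‖ ≤ m * v i := by
    intro i
    have : ‖x₀ - p i‖ / v i ≤ m := hle x₀ i
    calc ‖x₀ - p i‖ = ‖x₀ - p i‖ / v i * v i := (div_mul_cancel₀ _ (hv i).ne').symm
      _ ≤ m * v i := mul_le_mul_of_nonneg_right this (le_of_lt (hv i))
  have hzsub : ∀ i : ι, z - p i = (2:ℝ)⁻¹ • ((y - p i) + (x₀ - p i)) := by
    intro i
    rw [hzdef]
    module
  have hzle : f z ≤ m := by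
    apply Finset.sup'_le
    intro i _
    rw [div_le_iff₀ (hv i), hzsub i, norm_smul]
    have := norm_add_le (y - p i) (x₀ - p i)
    have h2 := hbound i
    have h3 := hbound' i
    simp only [norm_inv, Real.norm_ofNat]
    nlinarith [norm_nonneg (y - p i + (x₀ - p i))]
  have hzge : m ≤ f z := hglobal z
  have hfz : f z = m := le_antisymm hzle hzge
  obtain ⟨i, _, hi⟩ := Finset.exists_mem_eq_sup' (Finset.univ_nonempty (α := ι))
    (fun i => ‖z - p i‖ / v i)
  have hieq : ‖z - p i‖ / v i = m := by rw [← hfz]; exact hi.symm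
  have hznorm : ‖z - p i‖ = m * v i := by
    rw [← hieq]; exact (div_mul_cancel₀ _ (hv i).ne').symm
  have hsum : ‖(y - p i) + (x₀ - p i)‖ = 2 * (m * v i) := by
    have := hzsub i
    have h : ‖z - p i‖ = (2:ℝ)⁻¹ * ‖(y - p i) + (x₀ - p i)‖ := by
      rw [this, norm_smul]; simp
    rw [hznorm] at h
    linarith
  have h2 := hbound i
  have h3 := hbound' i
  have htri := norm_add_le (y - p i) (x₀ - p i)
  have hy_eq : ‖y - p i‖ = m * v i := by linarith
  have hx_eq : ‖x₀ - p i‖ = m * v i := by linarith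
  have : y - p i = x₀ - p i := by
    apply eq_of_norm_eq_of_norm_add_eq (hy_eq.trans hx_eq.symm)
    rw [hsum, hy_eq, hx_eq]; ring
  have := sub_left_injective this
  exact this
end

section
/- Let A, B ⊆ ℝⁿ be nonempty closed convex sets with A ∩ B ≠ ∅. Define sequences by a₁ = P_A(x₀), bₙ = P_B(aₙ), aₙ₊₁ = P_A(bₙ) for any x₀ ∈ ℝⁿ, where P_A, P_B are metric projections. Then both (aₙ) and (bₙ) converge to a common point x* ∈ A ∩ B. -/
open Filter Topology

lemma proj_ineq {E : Type*} [NormedAddCommGroup E] [InnerProductSpace ℝ E]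
    {A : Set E} (hAc : Convex ℝ A) {x p z : E} (hp : p ∈ A) (hz : z ∈ A)
    (hmin : ∀ w ∈ A, dist x p ≤ dist x w) :
    ‖p - z‖^2 + ‖x - p‖^2 ≤ ‖x - z‖^2 := by
  haveI : Nonempty A := ⟨⟨p, hp⟩⟩
  have hinner : ∀ w ∈ A, (inner ℝ (x - p) (w - p) : ℝ) ≤ 0 := by
    rw [← norm_eq_iInf_iff_real_inner_le_zero hAc hp]
    refine le_antisymm (le_ciInf fun w => ?_)
      (ciInf_le (f := fun w : A => ‖x - (w : E)‖) ⟨0, fun y hy => by rcases hy with ⟨w, rfl⟩; positivity⟩ ⟨p, hp⟩)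
    simpa [dist_eq_norm] using hmin w w.2
  have h1 : (inner ℝ (x - p) (z - p) : ℝ) ≤ 0 := hinner z hz
  have h2 : ‖(x - p) + (p - z)‖^2 = ‖x-p‖^2 + 2 * (inner ℝ (x-p) (p-z) : ℝ) + ‖p-z‖^2 :=
    norm_add_sq_real _ _
  have h3 : (x - p) + (p - z) = x - z := by abel
  have h4 : (inner ℝ (x-p) (p-z) : ℝ) = - (inner ℝ (x-p) (z-p) : ℝ) := by
    rw [← inner_neg_right]; congr 1; abel
  rw [h3] at h2
  nlinarith [h2, h1, h4]

theorem stmt_8 {n : ℕ} (A B : Set (EuclideanSpace ℝ (Fin n)))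
    (hA : IsClosed A) (hB : IsClosed B) (hAc : Convex ℝ A) (hBc : Convex ℝ B)
    (hAne : A.Nonempty) (hBne : B.Nonempty) (hAB : (A ∩ B).Nonempty)
    (PA PB : EuclideanSpace ℝ (Fin n) → EuclideanSpace ℝ (Fin n))
    (hPA : ∀ x, PA x ∈ A ∧ ∀ w ∈ A, dist x (PA x) ≤ dist x w)
    (hPB : ∀ x, PB x ∈ B ∧ ∀ w ∈ B, dist x (PB x) ≤ dist x w)
    (x₀ : EuclideanSpace ℝ (Fin n))
    (a b : ℕ → EuclideanSpace ℝ (Fin n))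
    (ha0 : a 0 = PA x₀)
    (hb : ∀ k, b k = PB (a k))
    (ha : ∀ k, a (k + 1) = PA (b k)) :
    ∃ xstar ∈ A ∩ B, Tendsto a atTop (𝓝 xstar) ∧ Tendsto b atTop (𝓝 xstar) := by
  have haA : ∀ k, a k ∈ A := by
    intro k
    cases k with
    | zero => rw [ha0]; exact (hPA x₀).1
    | succ m => rw [ha m]; exact (hPA (b m)).1
  have hbB : ∀ k, b k ∈ B := fun k => by rw [hb k]; exact (hPB (a k)).1
  -- key inequalities for any z ∈ A ∩ B
  have key1 : ∀ z ∈ B, ∀ k, ‖b k - z‖^2 + ‖a k - b k‖^2 ≤ ‖a k - z‖^2 := by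
    intro z hz k
    have := proj_ineq hBc (x := a k) (hPB (a k)).1 hz (hPB (a k)).2
    rw [← hb k] at this; exact this
  have key2 : ∀ z ∈ A, ∀ k, ‖a (k+1) - z‖^2 + ‖b k - a (k+1)‖^2 ≤ ‖b k - z‖^2 := by
    intro z hz k
    have := proj_ineq hAc (x := b k) (hPA (b k)).1 hz (hPA (b k)).2
    rw [← ha k] at this; exact this
  -- Fejér monotonicity
  have hmono : ∀ z ∈ A ∩ B, ∀ k, ‖a (k+1) - z‖ ≤ ‖b k - z‖ ∧ ‖b k - z‖ ≤ ‖a k - z‖ := by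
    intro z hz k
    constructor
    · have h := key2 z hz.1 k
      have := sq_nonneg ‖b k - a (k+1)‖
      nlinarith [norm_nonneg (a (k+1) - z), norm_nonneg (b k - z)]
    · have h := key1 z hz.2 k
      have := sq_nonneg ‖a k - b k‖
      nlinarith [norm_nonneg (b k - z), norm_nonneg (a k - z)]
  obtain ⟨z₀, hz₀⟩ := hAB
  -- g := ‖a k - z₀‖ is antitone
  have gAnti : ∀ z ∈ A ∩ B, Antitone (fun k => ‖a k - z‖) := by
    intro z hz
    apply antitone_nat_of_succ_le
    intro k
    exact le_trans (hmono z hz k).1 (hmono z hz k).2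
  -- a is bounded: a k ∈ closedBall z₀ R
  set R := ‖a 0 - z₀‖ with hR
  have haball : ∀ k, a k ∈ Metric.closedBall z₀ R := by
    intro k
    rw [Metric.mem_closedBall, dist_eq_norm]
    exact gAnti z₀ hz₀ (Nat.zero_le k)
  -- extract convergent subsequence
  obtain ⟨xs, hxsmem, φ, hφ, hφtend⟩ :=
    tendsto_subseq_of_bounded (Metric.isBounded_closedBall (x := z₀) (r := R)) haball
  clear hxsmem
  -- ‖a k - b k‖ → 0
  have gconv : Tendsto (fun k => ‖a k - z₀‖^2) atTop (𝓝 (⨅ k, ‖a k - z₀‖^2)) := by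
    apply tendsto_atTop_ciInf
    · intro i j hij
      exact pow_le_pow_left₀ (norm_nonneg _) (gAnti z₀ hz₀ hij) 2
    · exact ⟨0, fun y hy => by rcases hy with ⟨k, rfl⟩; positivity⟩
  set L := ⨅ k, ‖a k - z₀‖^2 with hL
  have hbconv : Tendsto (fun k => ‖b k - z₀‖^2) atTop (𝓝 L) := by
    have hsq : ∀ k, ‖a (k+1) - z₀‖^2 ≤ ‖b k - z₀‖^2 ∧ ‖b k - z₀‖^2 ≤ ‖a k - z₀‖^2 := by
      intro k
      have h1 := (hmono z₀ hz₀ k).1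
      have h2 := (hmono z₀ hz₀ k).2
      constructor <;> nlinarith [norm_nonneg (a (k+1) - z₀), norm_nonneg (b k - z₀),
        norm_nonneg (a k - z₀)]
    have h1 : Tendsto (fun k => ‖a (k+1) - z₀‖^2) atTop (𝓝 L) :=
      gconv.comp (tendsto_add_atTop_nat 1)
    exact tendsto_of_tendsto_of_tendsto_of_le_of_le h1 gconv
      (fun k => (hsq k).1) (fun k => (hsq k).2)
  have hdiff0 : Tendsto (fun k => a k - b k) atTop (𝓝 0) := by
    have hsq0 : Tendsto (fun k => ‖a k - b k‖^2) atTop (𝓝 0) := by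
      have hub : ∀ k, ‖a k - b k‖^2 ≤ ‖a k - z₀‖^2 - ‖b k - z₀‖^2 := by
        intro k; have := key1 z₀ hz₀.2 k; linarith
      have : Tendsto (fun k => ‖a k - z₀‖^2 - ‖b k - z₀‖^2) atTop (𝓝 (L - L)) :=
        gconv.sub hbconv
      rw [sub_self] at this
      exact tendsto_of_tendsto_of_tendsto_of_le_of_le tendsto_const_nhds this
        (fun k => sq_nonneg _) hub
    have hn0 : Tendsto (fun k => ‖a k - b k‖) atTop (𝓝 0) := by
      have h := (Real.continuous_sqrt.tendsto 0).comp hsq0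
      have heq : (fun x => Real.sqrt x) ∘ (fun k => ‖a k - b k‖^2)
          = fun k => ‖a k - b k‖ := by
        funext k; simp [Real.sqrt_sq (norm_nonneg _)]
      rw [heq] at h
      simpa using h
    exact tendsto_zero_iff_norm_tendsto_zero.2 hn0
  -- xs ∈ A ∩ B
  have hxsA : xs ∈ A := hA.mem_of_tendsto hφtend (Eventually.of_forall fun k => haA (φ k))
  have hbφtend : Tendsto (b ∘ φ) atTop (𝓝 xs) := by
    have hd : Tendsto ((fun k => a k - b k) ∘ φ) atTop (𝓝 0) :=
      hdiff0.comp hφ.tendsto_atTop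
    have := hφtend.sub hd
    simpa [Function.comp_def] using this
  have hxsB : xs ∈ B := hB.mem_of_tendsto hbφtend (Eventually.of_forall fun k => hbB (φ k))
  have hxs : xs ∈ A ∩ B := ⟨hxsA, hxsB⟩
  have haTend : Tendsto a atTop (𝓝 xs) := by
    have hAnti := gAnti xs hxs
    have hbdd : BddBelow (Set.range fun k => ‖a k - xs‖) :=
      ⟨0, fun y hy => by rcases hy with ⟨k, rfl⟩; positivity⟩
    have hconv : Tendsto (fun k => ‖a k - xs‖) atTop (𝓝 (⨅ k, ‖a k - xs‖)) :=
      tendsto_atTop_ciInf hAnti hbdd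
    have hsub0 : Tendsto (fun k => ‖a (φ k) - xs‖) atTop (𝓝 0) := by
      have := (tendsto_iff_norm_sub_tendsto_zero.1 hφtend)
      simpa [Function.comp] using this
    have hsub : Tendsto (fun k => ‖a (φ k) - xs‖) atTop (𝓝 (⨅ k, ‖a k - xs‖)) :=
      hconv.comp hφ.tendsto_atTop
    have hiInf0 : (⨅ k, ‖a k - xs‖) = 0 := tendsto_nhds_unique hsub hsub0
    rw [hiInf0] at hconv
    rw [tendsto_iff_norm_sub_tendsto_zero]
    exact hconv
  refine ⟨xs, hxs, haTend, ?_⟩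
  · have : Tendsto (fun k => a k - (a k - b k)) atTop (𝓝 (xs - 0)) :=
      haTend.sub hdiff0
    simpa using this
end

section
/- Let A, B ⊆ ℝⁿ be nonempty closed convex sets, with A compact and A ∩ B = ∅. Let (aₙ), (bₙ) be generated by alternating metric projections a₁ = P_A(x₀), bₙ = P_B(aₙ), aₙ₊₁ = P_A(bₙ). Then aₙ → a* ∈ A and bₙ → b* ∈ B with ‖a* - b*‖ = dist(A, B). -/
open Filter Topology
open scoped RealInnerProductSpace

section helpers
variable {E : Type*} [NormedAddCommGroup E] [InnerProductSpace ℝ E]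

private lemma proj_var {K : Set E} (hK : Convex ℝ K) {x c : E} (hc : c ∈ K)
    (hmin : ∀ w ∈ K, dist x c ≤ dist x w) : ∀ w ∈ K, ⟪x - c, w - c⟫ ≤ 0 := by
  refine (norm_eq_iInf_iff_real_inner_le_zero hK hc).1 ?_
  haveI : Nonempty K := ⟨⟨c, hc⟩⟩
  refine le_antisymm (le_ciInf fun w => ?_)
    (ciInf_le (f := fun w : K => ‖x - (w : E)‖) ⟨0, fun _ ⟨_, h⟩ => h ▸ norm_nonneg _⟩ ⟨c, hc⟩)
  simpa [dist_eq_norm] using hmin w w.2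

private lemma proj_unique {K : Set E} {x c c' : E}
    (hvc : ∀ w ∈ K, ⟪x - c, w - c⟫ ≤ 0) (hvc' : ∀ w ∈ K, ⟪x - c', w - c'⟫ ≤ 0)
    (hc : c ∈ K) (hc' : c' ∈ K) : c = c' := by
  have h1 : ⟪x - c, c' - c⟫ ≤ 0 := hvc c' hc'
  have h2 : 0 ≤ ⟪x - c', c' - c⟫ := by
    have := hvc' c hc
    rw [show c - c' = -(c' - c) by abel, inner_neg_right] at this
    linarith
  have hsq : ‖c' - c‖ ^ 2 ≤ 0 := by
    have hh : (x - c) - (x - c') = c' - c := by abel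
    calc ‖c' - c‖ ^ 2 = ⟪c' - c, c' - c⟫ := (real_inner_self_eq_norm_sq _).symm
      _ = ⟪x - c, c' - c⟫ - ⟪x - c', c' - c⟫ := by rw [← inner_sub_left, hh]
      _ ≤ 0 := by linarith
  have : ‖c' - c‖ = 0 := by nlinarith [norm_nonneg (c' - c)]
  have := norm_sub_eq_zero_iff.1 this
  exact this.symm

private lemma proj_nonexp {K : Set E} {P : E → E}
    (hPK : ∀ x, P x ∈ K) (hvar : ∀ x, ∀ w ∈ K, ⟪x - P x, w - P x⟫ ≤ 0) :
    ∀ x y, dist (P x) (P y) ≤ dist x y := by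
  intro x y
  have h1 : ⟪x - P x, P y - P x⟫ ≤ 0 := hvar x (P y) (hPK y)
  have h2 : ⟪y - P y, P x - P y⟫ ≤ 0 := hvar y (P x) (hPK x)
  have e1 : ⟪x - P x, P y - P x⟫ = -⟪x - P x, P x - P y⟫ := by
    rw [show P y - P x = -(P x - P y) by abel, inner_neg_right]
  have e3 : ⟪x - y, P x - P y⟫ - ‖P x - P y‖ ^ 2
      = ⟪x - P x, P x - P y⟫ - ⟪y - P y, P x - P y⟫ := by
    rw [← real_inner_self_eq_norm_sq, ← inner_sub_left, ← inner_sub_left]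
    congr 1
    abel
  have key : ‖P x - P y‖ ^ 2 ≤ ⟪x - y, P x - P y⟫ := by linarith
  have cs := real_inner_le_norm (x - y) (P x - P y)
  rw [dist_eq_norm, dist_eq_norm]
  nlinarith [norm_nonneg (P x - P y), norm_nonneg (x - y)]

end helpers

theorem stmt_9 {n : ℕ} (A B : Set (EuclideanSpace ℝ (Fin n)))
    (hA : IsClosed A) (hB : IsClosed B) (hAc : Convex ℝ A) (hBc : Convex ℝ B)
    (hAne : A.Nonempty) (hBne : B.Nonempty) (hAcomp : IsCompact A)
    (hAB : A ∩ B = ∅)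
    (PA PB : EuclideanSpace ℝ (Fin n) → EuclideanSpace ℝ (Fin n))
    (hPA : ∀ x, PA x ∈ A ∧ ∀ w ∈ A, dist x (PA x) ≤ dist x w)
    (hPB : ∀ x, PB x ∈ B ∧ ∀ w ∈ B, dist x (PB x) ≤ dist x w)
    (x₀ : EuclideanSpace ℝ (Fin n))
    (a b : ℕ → EuclideanSpace ℝ (Fin n))
    (ha0 : a 0 = PA x₀)
    (hb : ∀ k, b k = PB (a k))
    (ha : ∀ k, a (k + 1) = PA (b k)) :
    ∃ astar ∈ A, ∃ bstar ∈ B,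
      Tendsto a atTop (𝓝 astar) ∧ Tendsto b atTop (𝓝 bstar) ∧
      ‖astar - bstar‖ = sInf {d : ℝ | ∃ x ∈ A, ∃ y ∈ B, d = dist x y} := by
  -- membership of sequences
  have haA : ∀ k, a k ∈ A := by
    intro k
    cases k with
    | zero => rw [ha0]; exact (hPA x₀).1
    | succ m => rw [ha m]; exact (hPA _).1
  have hbB : ∀ k, b k ∈ B := fun k => (hb k) ▸ (hPB (a k)).1
  -- variational inequalities for the projections
  have varA : ∀ x, ∀ w ∈ A, ⟪x - PA x, w - PA x⟫ ≤ 0 :=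
    fun x => proj_var hAc (hPA x).1 (hPA x).2
  have varB : ∀ x, ∀ w ∈ B, ⟪x - PB x, w - PB x⟫ ≤ 0 :=
    fun x => proj_var hBc (hPB x).1 (hPB x).2
  have lipA : ∀ x y, dist (PA x) (PA y) ≤ dist x y :=
    proj_nonexp (fun x => (hPA x).1) varA
  have lipB : ∀ x y, dist (PB x) (PB y) ≤ dist x y :=
    proj_nonexp (fun x => (hPB x).1) varB
  have contA : Continuous PA :=
    (LipschitzWith.of_dist_le_mul (K := 1) (by simpa using lipA)).continuous
  have contB : Continuous PB :=
    (LipschitzWith.of_dist_le_mul (K := 1) (by simpa using lipB)).continuous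
  -- monotone distances
  have hstep1 : ∀ k, dist (a (k + 1)) (b (k + 1)) ≤ dist (a (k + 1)) (b k) := by
    intro k
    rw [hb (k + 1)]
    exact (hPB (a (k + 1))).2 (b k) (hbB k)
  have hstep2 : ∀ k, dist (a (k + 1)) (b k) ≤ dist (a k) (b k) := by
    intro k
    rw [ha k, dist_comm (PA (b k)) (b k), dist_comm (a k) (b k)]
    exact (hPA (b k)).2 (a k) (haA k)
  have hanti : Antitone (fun k => dist (a k) (b k)) :=
    antitone_nat_of_succ_le fun k => le_trans (hstep1 k) (hstep2 k)
  have hbdd : BddBelow (Set.range fun k => dist (a k) (b k)) :=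
    ⟨0, fun _ ⟨k, hk⟩ => hk ▸ dist_nonneg⟩
  set d : ℝ := ⨅ k, dist (a k) (b k) with hd_def
  have hdten : Tendsto (fun k => dist (a k) (b k)) atTop (𝓝 d) :=
    tendsto_atTop_ciInf hanti hbdd
  have hlb : ∀ k, d ≤ dist (a k) (b k) := fun k => ciInf_le hbdd k
  -- compactness: convergent subsequence
  obtain ⟨astar, hastarA, φ, hφ, hconv⟩ := hAcomp.tendsto_subseq haA
  set bstar := PB astar with hbstar_def
  have hbstarB : bstar ∈ B := (hPB astar).1
  have hbconv : Tendsto (fun j => b (φ j)) atTop (𝓝 bstar) := by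
    have : (fun j => b (φ j)) = fun j => PB (a (φ j)) := funext fun j => hb (φ j)
    rw [this]
    exact (contB.tendsto astar).comp hconv
  -- dist astar bstar = d
  have hd_eq : dist astar bstar = d := by
    have h1 : Tendsto (fun j => dist (a (φ j)) (b (φ j))) atTop (𝓝 (dist astar bstar)) :=
      hconv.dist hbconv
    have h2 : Tendsto (fun j => dist (a (φ j)) (b (φ j))) atTop (𝓝 d) :=
      hdten.comp hφ.tendsto_atTop
    exact tendsto_nhds_unique h1 h2
  have hdpos : 0 < d := by
    rcases lt_or_eq_of_le (hd_eq ▸ dist_nonneg : (0:ℝ) ≤ d) with h | h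
    · exact h
    · exfalso
      have : astar = bstar := by
        have : dist astar bstar = 0 := by rw [hd_eq, ← h]
        exact dist_eq_zero.1 this
      have : astar ∈ A ∩ B := ⟨hastarA, this ▸ hbstarB⟩
      rw [hAB] at this
      exact this
  -- PA bstar is at distance d from bstar
  have hPAconv : Tendsto (fun j => a (φ j + 1)) atTop (𝓝 (PA bstar)) := by
    have : (fun j => a (φ j + 1)) = fun j => PA (b (φ j)) := funext fun j => ha (φ j)
    rw [this]
    exact (contA.tendsto bstar).comp hbconv
  have hPAd_ge : d ≤ dist (PA bstar) bstar := by
    have h1 : Tendsto (fun j => dist (a (φ j + 1)) (b (φ j))) atTop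
        (𝓝 (dist (PA bstar) bstar)) := hPAconv.dist hbconv
    refine ge_of_tendsto h1 (Eventually.of_forall fun j => ?_)
    exact le_trans (le_trans (hlb (φ j + 1)) (hstep1 (φ j))) (le_refl _)
  have hPAd_le : dist (PA bstar) bstar ≤ d := by
    have := (hPA bstar).2 astar hastarA
    rw [dist_comm bstar (PA bstar), dist_comm bstar astar] at this
    calc dist (PA bstar) bstar ≤ dist astar bstar := this
      _ = d := hd_eq
  -- astar is a minimizer of dist to bstar over A
  have hastar_min : ∀ w ∈ A, dist bstar astar ≤ dist bstar w := by
    intro w hw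
    rw [dist_comm bstar astar, hd_eq]
    calc d = dist (PA bstar) bstar := le_antisymm hPAd_ge hPAd_le
      _ = dist bstar (PA bstar) := dist_comm _ _
      _ ≤ dist bstar w := (hPA bstar).2 w hw
  have varAstar : ∀ w ∈ A, ⟪bstar - astar, w - astar⟫ ≤ 0 :=
    proj_var hAc hastarA hastar_min
  have varBstar : ∀ y ∈ B, ⟪astar - bstar, y - bstar⟫ ≤ 0 := by
    have := proj_var hBc (hPB astar).1 (hPB astar).2
    rw [← hbstar_def] at this
    exact this
  -- astar = PA bstar
  have hfix : astar = PA bstar :=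
    proj_unique varAstar (varA bstar) hastarA (hPA bstar).1
  -- Fejér monotonicity of dist (a k) astar
  have hfej : ∀ k, dist (b k) bstar ≤ dist (a k) astar := by
    intro k
    rw [hb k, hbstar_def]
    exact lipB (a k) astar
  have hfej2 : ∀ k, dist (a (k + 1)) astar ≤ dist (b k) bstar := by
    intro k
    rw [ha k, hfix]
    exact lipA (b k) bstar
  have heanti : Antitone (fun k => dist (a k) astar) :=
    antitone_nat_of_succ_le fun k => le_trans (hfej2 k) (hfej k)
  have hebdd : BddBelow (Set.range fun k => dist (a k) astar) :=
    ⟨0, fun _ ⟨k, hk⟩ => hk ▸ dist_nonneg⟩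
  have heten : Tendsto (fun k => dist (a k) astar) atTop (𝓝 (⨅ k, dist (a k) astar)) :=
    tendsto_atTop_ciInf heanti hebdd
  have hezero : (⨅ k, dist (a k) astar) = 0 := by
    have h1 : Tendsto (fun j => dist (a (φ j)) astar) atTop (𝓝 (⨅ k, dist (a k) astar)) :=
      heten.comp hφ.tendsto_atTop
    have h2 : Tendsto (fun j => dist (a (φ j)) astar) atTop (𝓝 0) :=
      tendsto_iff_dist_tendsto_zero.1 hconv
    exact tendsto_nhds_unique h1 h2
  have haten : Tendsto a atTop (𝓝 astar) := by
    rw [tendsto_iff_dist_tendsto_zero]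
    rw [hezero] at heten
    exact heten
  have hbten : Tendsto b atTop (𝓝 bstar) := by
    rw [tendsto_iff_dist_tendsto_zero]
    refine squeeze_zero (fun k => dist_nonneg) hfej ?_
    rw [hezero] at heten
    exact heten
  -- the infimum equality
  refine ⟨astar, hastarA, bstar, hbstarB, haten, hbten, ?_⟩
  have hmem : dist astar bstar ∈ {d : ℝ | ∃ x ∈ A, ∃ y ∈ B, d = dist x y} :=
    ⟨astar, hastarA, bstar, hbstarB, rfl⟩
  have hlow : ∀ s ∈ {d : ℝ | ∃ x ∈ A, ∃ y ∈ B, d = dist x y}, dist astar bstar ≤ s := by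
    rintro s ⟨x, hx, y, hy, rfl⟩
    have h1 : 0 ≤ ⟪x - astar, astar - bstar⟫ := by
      have := varAstar x hx
      rw [show bstar - astar = -(astar - bstar) by abel, inner_neg_left,
        real_inner_comm] at this
      linarith
    have h2 : 0 ≤ ⟪bstar - y, astar - bstar⟫ := by
      have := varBstar y hy
      rw [show y - bstar = -(bstar - y) by abel, inner_neg_right, real_inner_comm] at this
      linarith
    have hsplit : ⟪x - y, astar - bstar⟫
        = ⟪x - astar, astar - bstar⟫ + ⟪astar - bstar, astar - bstar⟫
          + ⟪bstar - y, astar - bstar⟫ := by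
      rw [← inner_add_left, ← inner_add_left]
      congr 1
      abel
    have hsq : ‖astar - bstar‖ ^ 2 ≤ ⟪x - y, astar - bstar⟫ := by
      rw [hsplit, real_inner_self_eq_norm_sq]
      linarith
    have cs := real_inner_le_norm (x - y) (astar - bstar)
    have hnorm_eq : ‖astar - bstar‖ = d := by rw [← dist_eq_norm, hd_eq]
    rw [dist_eq_norm, dist_eq_norm]
    nlinarith [norm_nonneg (x - y)]
  rw [dist_eq_norm] at hmem hlow
  exact le_antisymm
    (le_csInf ⟨_, hmem⟩ fun s hs => hlow s hs)
    (csInf_le ⟨0, fun _ ⟨x, _, y, _, h⟩ => h ▸ dist_nonneg⟩ hmem)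
end

section
/- Let C₁, …, C_r ⊆ ℝⁿ be closed convex sets with nonempty intersection. Dykstra's algorithm, defined by xₙⁱ = P_{Cᵢ}(xₙ^{i-1} - I_{n-1}ⁱ), Iₙⁱ = xₙⁱ - (xₙ^{i-1} - I_{n-1}ⁱ), xₙ⁰ = x_{n-1}^r, with x₁⁰ = x and I₀ⁱ = 0, produces iterates converging to P_{⋂ᵢ Cᵢ}(x), the metric projection of x onto the intersection. -/
open Filter Topology Finset
open scoped RealInnerProductSpace

private lemma proj_inner_le {E : Type*} [NormedAddCommGroup E] [InnerProductSpace ℝ E]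
    {K : Set E} (hK : Convex ℝ K) {z v : E} (hv : v ∈ K)
    (hmin : ∀ w ∈ K, dist z v ≤ dist z w) :
    ∀ w ∈ K, ⟪z - v, w - v⟫ ≤ 0 := by
  rw [← norm_eq_iInf_iff_real_inner_le_zero hK hv]
  haveI : Nonempty K := ⟨⟨v, hv⟩⟩
  apply le_antisymm
  · exact le_ciInf fun w => by simpa [dist_eq_norm] using hmin w w.2
  · have hbdd : BddBelow (Set.range fun w : K => ‖z - (w : E)‖) := by
      refine ⟨0, ?_⟩
      rintro b ⟨w, rfl⟩
      exact norm_nonneg _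
    exact ciInf_le hbdd (⟨v, hv⟩ : K)

private lemma exists_small_mul {d : ℕ → ℝ} {A : ℝ}
    (hd : ∀ k, 0 ≤ d k) (hA : ∀ M, ∑ k ∈ Finset.range M, (d k)^2 ≤ A) :
    ∀ ε > 0, ∀ N : ℕ, ∃ l, N ≤ l ∧ (∑ k ∈ Finset.range (l+1), d k) * d l < ε := by
  intro ε hε N
  by_contra hcon
  push_neg at hcon
  -- d l ^ 2 ≥ ε^2 / ((l+1) * A) for l ≥ N
  have hA0 : 0 < A := by
    have h1 := hcon N le_rfl
    have h2 : 0 < d N := by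
      by_contra h
      push_neg at h
      have : d N = 0 := le_antisymm h (hd N)
      rw [this, mul_zero] at h1; linarith
    have h3 : (d N)^2 ≤ A := by
      have := hA (N+1)
      calc (d N)^2 ≤ ∑ k ∈ Finset.range (N+1), (d k)^2 :=
            Finset.single_le_sum (fun k _ => sq_nonneg (d k)) (self_mem_range_succ N)
        _ ≤ A := this
    nlinarith
  have hkey : ∀ l, N ≤ l → ε^2 / ((l+1) * A) ≤ (d l)^2 := by
    intro l hl
    have h1 := hcon l hl
    have hsum_nonneg : 0 ≤ ∑ k ∈ Finset.range (l+1), d k :=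
      Finset.sum_nonneg fun k _ => hd k
    have hcs : (∑ k ∈ Finset.range (l+1), d k)^2 ≤ (l+1) * ∑ k ∈ Finset.range (l+1), (d k)^2 := by
      simpa using sq_sum_le_card_mul_sum_sq (s := Finset.range (l+1)) (f := d)
    have h2 : (∑ k ∈ Finset.range (l+1), d k)^2 ≤ (l+1) * A := by
      calc (∑ k ∈ Finset.range (l+1), d k)^2 ≤ (l+1) * ∑ k ∈ Finset.range (l+1), (d k)^2 := hcs
        _ ≤ (l+1) * A := by
            have : (0:ℝ) ≤ (l+1:ℝ) := by positivity
            exact mul_le_mul_of_nonneg_left (hA (l+1)) this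
    have hpos : (0:ℝ) < (l+1) * A := by positivity
    rw [div_le_iff₀ hpos]
    have : ε^2 ≤ ((∑ k ∈ Finset.range (l+1), d k) * d l)^2 := by
      have := mul_le_mul h1 h1 (le_of_lt hε) (le_trans (le_of_lt hε) h1)
      nlinarith
    calc ε^2 ≤ ((∑ k ∈ Finset.range (l+1), d k) * d l)^2 := this
      _ = (∑ k ∈ Finset.range (l+1), d k)^2 * (d l)^2 := by ring
      _ ≤ ((l+1) * A) * (d l)^2 :=
          mul_le_mul_of_nonneg_right h2 (sq_nonneg _)
      _ = (d l)^2 * ((l+1) * A) := by ring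
  -- summability contradiction
  have hsummable : Summable (fun k => (d k)^2) :=
    summable_of_sum_range_le (fun k => sq_nonneg _) hA
  have hsh : Summable (fun l => (d (l + N))^2) := (summable_nat_add_iff N).2 hsummable
  have hcomp : Summable (fun l : ℕ => ε^2 / ((N + l + 1 : ℕ) * A)) := by
    apply Summable.of_nonneg_of_le (fun l => by positivity) _ hsh
    intro l
    have := hkey (l + N) (Nat.le_add_left N l)
    have e : (N + l + 1 : ℕ) = (l + N + 1 : ℕ) := by omega
    rw [e]
    simpa [Nat.cast_add] using this
  have hcomp2 : Summable (fun l : ℕ => (ε^2 / ((N + 1) * A)) * (1 / (l + 1 : ℝ))) := by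
    apply Summable.of_nonneg_of_le (fun l => by positivity) _ hcomp
    intro l
    rw [div_mul_eq_mul_div, mul_one_div, div_div]
    apply div_le_div_of_nonneg_left (sq_nonneg ε) (by positivity)
    have : ((N + l + 1 : ℕ) : ℝ) = (N : ℝ) + l + 1 := by push_cast; ring
    rw [this]
    nlinarith [Nat.cast_nonneg (α := ℝ) N, Nat.cast_nonneg (α := ℝ) l, hA0,
      mul_nonneg (Nat.cast_nonneg (α := ℝ) N) (Nat.cast_nonneg (α := ℝ) l)]
  have hne : (ε^2 / ((N + 1) * A)) ≠ 0 := by positivity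
  have : Summable (fun l : ℕ => (1 / (l + 1 : ℝ))) :=
    (summable_mul_left_iff (f := fun l : ℕ => (1 / (l + 1 : ℝ))) hne).1 hcomp2
  refine Real.not_summable_one_div_natCast ((summable_nat_add_iff 1).1 ?_)
  simpa [Nat.cast_add] using this

set_option maxHeartbeats 1000000 in
theorem stmt_14 {n r : ℕ} (hr : 1 ≤ r)
    (C : ℕ → Set (EuclideanSpace ℝ (Fin n)))
    (hCcl : ∀ i, 1 ≤ i → i ≤ r → IsClosed (C i))
    (hCcv : ∀ i, 1 ≤ i → i ≤ r → Convex ℝ (C i))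
    (hInt : (⋂ i ∈ Set.Icc 1 r, C i).Nonempty)
    (P : ℕ → EuclideanSpace ℝ (Fin n) → EuclideanSpace ℝ (Fin n))
    (hP : ∀ i, 1 ≤ i → i ≤ r → ∀ z, P i z ∈ C i ∧ ∀ w ∈ C i, dist z (P i z) ≤ dist z w)
    (x₀ : EuclideanSpace ℝ (Fin n))
    (x I : ℕ → ℕ → EuclideanSpace ℝ (Fin n))
    (hstart : x 1 0 = x₀)
    (hI0 : ∀ i, I 0 i = 0)
    (hx : ∀ m, 1 ≤ m → ∀ i, 1 ≤ i → i ≤ r → x m i = P i (x m (i - 1) - I (m - 1) i))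
    (hI : ∀ m, 1 ≤ m → ∀ i, 1 ≤ i → i ≤ r → I m i = x m i - (x m (i - 1) - I (m - 1) i))
    (hrow : ∀ m, 1 ≤ m → x (m + 1) 0 = x m r) :
    ∃ q ∈ ⋂ i ∈ Set.Icc 1 r, C i,
      (∀ w ∈ ⋂ i ∈ Set.Icc 1 r, C i, dist x₀ q ≤ dist x₀ w) ∧
      Tendsto (fun m => x m r) atTop (𝓝 q) := by
  classical
  obtain ⟨y₀, hy₀⟩ := hInt
  have hmemK : ∀ y : EuclideanSpace ℝ (Fin n), y ∈ ⋂ i ∈ Set.Icc 1 r, C i →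
      ∀ j, j < r → y ∈ C (j+1) := by
    intro y hy j hj
    exact Set.mem_iInter₂.1 hy (j+1) ⟨by omega, by omega⟩
  have hy₀' : ∀ j, j < r → y₀ ∈ C (j+1) := hmemK y₀ hy₀
  -- membership of iterates
  have hmem : ∀ m, 1 ≤ m → ∀ j, j < r → x m (j+1) ∈ C (j+1) := by
    intro m hm j hj
    rw [hx m hm (j+1) (by omega) (by omega)]
    exact (hP (j+1) (by omega) (by omega) _).1
  -- variational inequality
  have hVI : ∀ m, ∀ j, j < r → ∀ w ∈ C (j+1), 0 ≤ ⟪I m (j+1), w - x m (j+1)⟫ := by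
    intro m j hj w hw
    rcases Nat.eq_zero_or_pos m with hm | hm
    · simp [hm, hI0]
    · have hxm := hx m hm (j+1) (by omega) (by omega)
      have hIm := hI m hm (j+1) (by omega) (by omega)
      simp only [Nat.add_sub_cancel] at hxm hIm
      set z := x m j - I (m-1) (j+1) with hz
      have hvK : x m (j+1) ∈ C (j+1) := hmem m hm j hj
      have hminz : ∀ w' ∈ C (j+1), dist z (x m (j+1)) ≤ dist z w' := by
        intro w' hw'
        rw [hxm]
        exact (hP (j+1) (by omega) (by omega) z).2 w' hw'
      have hle := proj_inner_le (hCcv (j+1) (by omega) (by omega)) hvK hminz w hw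
      have hIz : I m (j+1) = -(z - x m (j+1)) := by rw [hIm]; abel
      rw [hIz, inner_neg_left]
      linarith
  -- step difference
  have hdiff : ∀ M, ∀ j, j < r →
      x (M+1) j - x (M+1) (j+1) = I M (j+1) - I (M+1) (j+1) := by
    intro M j hj
    have hIm := hI (M+1) (by omega) (j+1) (by omega) (by omega)
    simp only [Nat.add_sub_cancel] at hIm
    rw [hIm]; abel
  -- the row sequence, with f 0 = x₀
  set f : ℕ → EuclideanSpace ℝ (Fin n) := fun m => if m = 0 then x₀ else x m r with hfdef
  have hf0 : f 0 = x₀ := rfl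
  have hfs : ∀ m, 1 ≤ m → f m = x m r := by
    intro m hm
    show (if m = 0 then x₀ else x m r) = x m r
    rw [if_neg (by omega)]
  have hrow' : ∀ m, x (m+1) 0 = f m := by
    intro m
    rcases Nat.eq_zero_or_pos m with h | h
    · simp [h, hstart, hf0]
    · rw [hrow m h, hfs m h]
  -- real quantities
  set c : ℕ → ℝ := fun m => ∑ j ∈ Finset.range r, ‖x m (j+1) - x m j‖ with hcdef
  set s : ℕ → ℝ := fun m => ∑ k ∈ Finset.range m, c (k+1) with hsdef
  set u : ℕ → ℕ → ℝ := fun k j => ⟪I k (j+1), x (k+1) (j+1) - x k (j+1)⟫ with hudef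
  set S : ℕ → ℝ := fun M => ∑ k ∈ Finset.range M,
    ∑ j ∈ Finset.range r, ‖x (k+1) (j+1) - x (k+1) j‖^2 with hSdef
  set T : ℕ → ℝ := fun M => ∑ j ∈ Finset.range r, ∑ k ∈ Finset.range M, u k j with hTdef
  set W : EuclideanSpace ℝ (Fin n) → ℕ → ℝ :=
    fun y M => ∑ j ∈ Finset.range r, ⟪I M (j+1), y - x M (j+1)⟫ with hWdef
  have hc_nonneg : ∀ m, 0 ≤ c m := fun m => Finset.sum_nonneg fun j _ => norm_nonneg _
  have hs_nonneg : ∀ m, 0 ≤ s m := fun m => Finset.sum_nonneg fun k _ => hc_nonneg _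
  have hu_nonneg : ∀ k j, j < r → 0 ≤ u k j := by
    intro k j hj
    exact hVI k j hj _ (hmem (k+1) (by omega) j hj)
  have hW_nonneg : ∀ y, (∀ j, j < r → y ∈ C (j+1)) → ∀ M, 0 ≤ W y M := by
    intro y hy M
    exact Finset.sum_nonneg fun j hj => hVI M j (Finset.mem_range.1 hj) _ (hy j (Finset.mem_range.1 hj))
  have hT_nonneg : ∀ M, 0 ≤ T M :=
    fun M => Finset.sum_nonneg fun j hj => Finset.sum_nonneg fun k _ =>
      hu_nonneg k j (Finset.mem_range.1 hj)
  have hS_nonneg : ∀ M, 0 ≤ S M :=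
    fun M => Finset.sum_nonneg fun k _ => Finset.sum_nonneg fun j _ => sq_nonneg _
  have hIdent : ∀ (y : EuclideanSpace ℝ (Fin n)) (M : ℕ),
      ‖x₀ - y‖^2 = ‖f M - y‖^2 + S M + 2 * T M + 2 * W y M := by
    intro y M
    induction M with
    | zero =>
      have hS0 : S 0 = 0 := by simp [hSdef]
      have hT0 : T 0 = 0 := by simp [hTdef]
      have hW0 : W y 0 = 0 := by simp [hWdef, hI0]
      rw [hS0, hT0, hW0, hf0]; ring
    | succ M ih =>
      have key : ∀ j ∈ Finset.range r,
          ‖x (M+1) j - y‖^2 - ‖x (M+1) (j+1) - y‖^2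
          = ‖x (M+1) (j+1) - x (M+1) j‖^2
            + 2 * ⟪I M (j+1) - I (M+1) (j+1), x (M+1) (j+1) - y⟫ := by
        intro j hj
        have hj' := Finset.mem_range.1 hj
        have hd := hdiff M j hj'
        have expand := norm_add_sq_real (x (M+1) j - x (M+1) (j+1)) (x (M+1) (j+1) - y)
        have e1 : x (M+1) j - x (M+1) (j+1) + (x (M+1) (j+1) - y) = x (M+1) j - y := by abel
        rw [e1] at expand
        have e2 : ‖x (M+1) j - x (M+1) (j+1)‖ = ‖x (M+1) (j+1) - x (M+1) j‖ := norm_sub_rev _ _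
        rw [expand, e2, hd]
        ring
      have tele : ∑ j ∈ Finset.range r,
          (‖x (M+1) j - y‖^2 - ‖x (M+1) (j+1) - y‖^2)
          = ‖x (M+1) 0 - y‖^2 - ‖x (M+1) r - y‖^2 :=
        Finset.sum_range_sub' (fun j => ‖x (M+1) j - y‖^2) r
      rw [Finset.sum_congr rfl key, Finset.sum_add_distrib, ← Finset.mul_sum] at tele
      have hB : ∀ j ∈ Finset.range r,
          ⟪I M (j+1) - I (M+1) (j+1), x (M+1) (j+1) - y⟫
          = u M j + ⟪I (M+1) (j+1), y - x (M+1) (j+1)⟫ - ⟪I M (j+1), y - x M (j+1)⟫ := by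
        intro j _
        simp only [hudef, inner_sub_left, inner_sub_right]
        ring
      have hsumB : ∑ j ∈ Finset.range r, ⟪I M (j+1) - I (M+1) (j+1), x (M+1) (j+1) - y⟫
          = (∑ j ∈ Finset.range r, u M j) + W y (M+1) - W y M := by
        rw [Finset.sum_congr rfl hB, Finset.sum_sub_distrib, Finset.sum_add_distrib]
      have hSsucc : S (M+1) = S M + ∑ j ∈ Finset.range r, ‖x (M+1) (j+1) - x (M+1) j‖^2 := by
        simp only [hSdef]
        rw [Finset.sum_range_succ]
      have hTsucc : T (M+1) = T M + ∑ j ∈ Finset.range r, u M j := by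
        simp only [hTdef]
        rw [← Finset.sum_add_distrib]
        exact Finset.sum_congr rfl fun j _ => Finset.sum_range_succ _ M
      have hx0 : x (M+1) 0 = f M := hrow' M
      have hxr : x (M+1) r = f (M+1) := (hfs (M+1) (by omega)).symm
      rw [hx0, hxr, hsumB] at tele
      rw [hSsucc, hTsucc]
      linarith [ih, tele]
  set A0 : ℝ := ‖x₀ - y₀‖^2 with hA0def
  have hbound : ∀ M, S M ≤ A0 ∧ ‖f M - y₀‖^2 ≤ A0 := by
    intro M
    have hid := hIdent y₀ M
    have h1 := hW_nonneg y₀ hy₀' M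
    have h2 := hT_nonneg M
    have h3 := hS_nonneg M
    have h4 := sq_nonneg ‖f M - y₀‖
    constructor <;> [linarith; linarith]
  have hc2 : ∀ M, ∑ k ∈ Finset.range M, (c (k+1))^2 ≤ r * A0 := by
    intro M
    have h1 : ∀ k ∈ Finset.range M, (c (k+1))^2
        ≤ r * ∑ j ∈ Finset.range r, ‖x (k+1) (j+1) - x (k+1) j‖^2 := by
      intro k _
      have h := sq_sum_le_card_mul_sum_sq (s := Finset.range r)
        (f := fun j => ‖x (k+1) (j+1) - x (k+1) j‖)
      simpa [hcdef] using h
    calc ∑ k ∈ Finset.range M, (c (k+1))^2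
        ≤ ∑ k ∈ Finset.range M, r * ∑ j ∈ Finset.range r, ‖x (k+1) (j+1) - x (k+1) j‖^2 :=
          Finset.sum_le_sum h1
      _ = r * S M := by rw [hSdef, Finset.mul_sum]
      _ ≤ r * A0 := mul_le_mul_of_nonneg_left (hbound M).1 (Nat.cast_nonneg r)
  have hsummable : Summable (fun k => (c (k+1))^2) :=
    summable_of_sum_range_le (fun k => sq_nonneg _) hc2
  have hc_to0 : Tendsto c atTop (𝓝 0) := by
    have h1 : Tendsto (fun k => (c (k+1))^2) atTop (𝓝 0) := hsummable.tendsto_atTop_zero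
    have h2 : Tendsto (fun k => c (k+1)) atTop (𝓝 0) := by
      have h3 : Tendsto (fun k => Real.sqrt ((c (k+1))^2)) atTop (𝓝 (Real.sqrt 0)) :=
        (Real.continuous_sqrt.tendsto 0).comp h1
      simp only [Real.sqrt_zero] at h3
      exact h3.congr fun k => Real.sqrt_sq (hc_nonneg (k+1))
    exact (tendsto_add_atTop_iff_nat 1).1 h2
  have hI_eq : ∀ m, ∀ j, j < r →
      I m (j+1) = ∑ k ∈ Finset.range m, (x (k+1) (j+1) - x (k+1) j) := by
    intro m j hj
    induction m with
    | zero => simp [hI0]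
    | succ m ih =>
      rw [Finset.sum_range_succ, ← ih]
      have h := hdiff m j hj
      calc I (m+1) (j+1) = I m (j+1) - (I m (j+1) - I (m+1) (j+1)) := by abel
        _ = I m (j+1) - (x (m+1) j - x (m+1) (j+1)) := by rw [h]
        _ = I m (j+1) + (x (m+1) (j+1) - x (m+1) j) := by abel
  have hI_norm : ∀ m, ∀ j, j < r → ‖I m (j+1)‖ ≤ s m := by
    intro m j hj
    rw [hI_eq m j hj]
    calc ‖∑ k ∈ Finset.range m, (x (k+1) (j+1) - x (k+1) j)‖
        ≤ ∑ k ∈ Finset.range m, ‖x (k+1) (j+1) - x (k+1) j‖ := norm_sum_le _ _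
      _ ≤ ∑ k ∈ Finset.range m, c (k+1) := by
          apply Finset.sum_le_sum
          intro k _
          exact Finset.single_le_sum (f := fun j' => ‖x (k+1) (j'+1) - x (k+1) j'‖)
            (fun j' _ => norm_nonneg _) (Finset.mem_range.2 hj)
      _ = s m := rfl
  have hxr_diff : ∀ m, ∀ j, j < r → ‖x m r - x m (j+1)‖ ≤ c m := by
    intro m j hj
    have tele1 : ∑ j' ∈ Finset.range r, (x m (j'+1) - x m j') = x m r - x m 0 :=
      Finset.sum_range_sub (fun i => x m i) r
    have tele2 : ∑ j' ∈ Finset.range (j+1), (x m (j'+1) - x m j') = x m (j+1) - x m 0 :=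
      Finset.sum_range_sub (fun i => x m i) (j+1)
    have hIco : x m r - x m (j+1) = ∑ j' ∈ Finset.Ico (j+1) r, (x m (j'+1) - x m j') := by
      rw [Finset.sum_Ico_eq_sub _ (by omega : j+1 ≤ r), tele1, tele2]; abel
    rw [hIco]
    calc ‖∑ j' ∈ Finset.Ico (j+1) r, (x m (j'+1) - x m j')‖
        ≤ ∑ j' ∈ Finset.Ico (j+1) r, ‖x m (j'+1) - x m j'‖ := norm_sum_le _ _
      _ ≤ ∑ j' ∈ Finset.range r, ‖x m (j'+1) - x m j'‖ := by
          apply Finset.sum_le_sum_of_subset_of_nonneg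
          · intro i hi; rw [Finset.mem_range]; exact (Finset.mem_Ico.1 hi).2
          · intro i _ _; exact norm_nonneg _
      _ = c m := rfl
  have hx0I : ∀ m, f m = x₀ + ∑ j ∈ Finset.range r, I m (j+1) := by
    intro m
    induction m with
    | zero => simp [hf0, hI0]
    | succ m ih =>
      have tele1 : ∑ j ∈ Finset.range r, (x (m+1) (j+1) - x (m+1) j) = x (m+1) r - x (m+1) 0 :=
        Finset.sum_range_sub (fun i => x (m+1) i) r
      have hterm : ∀ j ∈ Finset.range r,
          x (m+1) (j+1) - x (m+1) j = I (m+1) (j+1) - I m (j+1) := by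
        intro j hj
        have h := hdiff m j (Finset.mem_range.1 hj)
        calc x (m+1) (j+1) - x (m+1) j = -(x (m+1) j - x (m+1) (j+1)) := by abel
          _ = -(I m (j+1) - I (m+1) (j+1)) := by rw [h]
          _ = I (m+1) (j+1) - I m (j+1) := by abel
      rw [Finset.sum_congr rfl hterm, Finset.sum_sub_distrib] at tele1
      have hfm1 : f (m+1) = x (m+1) r := hfs (m+1) (by omega)
      have h2 : x (m+1) r = x (m+1) 0
          + (∑ j ∈ Finset.range r, I (m+1) (j+1) - ∑ j ∈ Finset.range r, I m (j+1)) := by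
        rw [tele1]; abel
      rw [hfm1, h2, hrow' m, ih]; abel
  have key : ∀ N : ℕ, ∃ m, N ≤ m ∧ 1 ≤ m ∧ s m * c m < 1/(N+1) := by
    intro N
    obtain ⟨l, hl, hlt⟩ := exists_small_mul (d := fun k => c (k+1))
      (fun k => hc_nonneg (k+1)) hc2 (1/(N+1) : ℝ) (by positivity) N
    exact ⟨l+1, by omega, by omega, hlt⟩
  choose φ hφ1 hφ2 hφ3 using key
  have hball : ∀ N, x (φ N) r ∈ Metric.closedBall y₀ ‖x₀ - y₀‖ := by
    intro N
    have h1 : ‖f (φ N) - y₀‖^2 ≤ A0 := (hbound (φ N)).2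
    have h2 : ‖f (φ N) - y₀‖ ≤ ‖x₀ - y₀‖ := by
      nlinarith [norm_nonneg (f (φ N) - y₀), norm_nonneg (x₀ - y₀)]
    rw [Metric.mem_closedBall, dist_eq_norm, ← hfs (φ N) (hφ2 N)]
    exact h2
  obtain ⟨q, hqcl, ψ, hψmono, hψtend⟩ :=
    tendsto_subseq_of_bounded Metric.isBounded_closedBall (x := fun N => x (φ N) r) hball
  set μ : ℕ → ℕ := fun j => φ (ψ j) with hμdef
  have hμ1 : ∀ j, 1 ≤ μ j := fun j => hφ2 (ψ j)
  have hμge : ∀ j, j ≤ μ j := fun j => le_trans hψmono.le_apply (hφ1 (ψ j))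
  have hμtop : Tendsto μ atTop atTop := tendsto_atTop_mono hμge tendsto_id
  have hvq : Tendsto (fun j => x (μ j) r) atTop (𝓝 q) := hψtend
  have hscμ : Tendsto (fun j => s (μ j) * c (μ j)) atTop (𝓝 0) := by
    apply tendsto_of_tendsto_of_tendsto_of_le_of_le (g := fun _ => (0:ℝ))
      (h := fun j : ℕ => 1/((j:ℝ)+1)) tendsto_const_nhds tendsto_one_div_add_atTop_nhds_zero_nat
    · intro j; exact mul_nonneg (hs_nonneg _) (hc_nonneg _)
    · intro j
      have h1 := hφ3 (ψ j)
      have h2 : (1:ℝ)/((ψ j : ℝ)+1) ≤ 1/((j:ℝ)+1) := by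
        apply one_div_le_one_div_of_le (by positivity)
        have : (j:ℝ) ≤ (ψ j : ℝ) := Nat.cast_le.2 hψmono.le_apply
        linarith
      exact le_trans h1.le h2
  have hcμ : Tendsto (fun j => c (μ j)) atTop (𝓝 0) := hc_to0.comp hμtop
  have hqmem : ∀ j, j < r → q ∈ C (j+1) := by
    intro j hj
    have htd : Tendsto (fun jj => x (μ jj) (j+1)) atTop (𝓝 q) := by
      rw [tendsto_iff_dist_tendsto_zero]
      apply squeeze_zero (fun jj => dist_nonneg)
        (g := fun jj => c (μ jj) + dist (x (μ jj) r) q)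
      · intro jj
        calc dist (x (μ jj) (j+1)) q
            ≤ dist (x (μ jj) (j+1)) (x (μ jj) r) + dist (x (μ jj) r) q := dist_triangle _ _ _
          _ ≤ c (μ jj) + dist (x (μ jj) r) q := by
              have h := hxr_diff (μ jj) j hj
              rw [dist_eq_norm, norm_sub_rev]
              linarith
      · have := hcμ.add (tendsto_iff_dist_tendsto_zero.1 hvq)
        simpa using this
    exact (hCcl (j+1) (by omega) (by omega)).mem_of_tendsto htd
      (Eventually.of_forall fun jj => hmem (μ jj) (hμ1 jj) j hj)
  have hqK : q ∈ ⋂ i ∈ Set.Icc 1 r, C i := by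
    refine Set.mem_iInter₂.2 fun i hi => ?_
    obtain ⟨hi1, hi2⟩ := hi
    have h := hqmem (i-1) (by omega : i - 1 < r)
    have e : i - 1 + 1 = i := by omega
    rwa [e] at h
  have hproj : ∀ w ∈ ⋂ i ∈ Set.Icc 1 r, C i, ⟪x₀ - q, w - q⟫ ≤ 0 := by
    intro w hw
    have hw' := hmemK w hw
    have hineq : ∀ m, 1 ≤ m → ⟪x₀ - f m, w - f m⟫ ≤ r * (s m * c m) := by
      intro m hm
      have hxf : x₀ - f m = - ∑ j ∈ Finset.range r, I m (j+1) := by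
        rw [hx0I m]; abel
      rw [hxf, inner_neg_left, sum_inner]
      have hterm : ∀ j ∈ Finset.range r, -⟪I m (j+1), w - f m⟫ ≤ s m * c m := by
        intro j hj
        have hj' := Finset.mem_range.1 hj
        have hsplit : w - f m = (w - x m (j+1)) + (x m (j+1) - f m) := by abel
        rw [hsplit, inner_add_right]
        have h1 : 0 ≤ ⟪I m (j+1), w - x m (j+1)⟫ := hVI m j hj' w (hw' j hj')
        have h3 : ‖x m (j+1) - f m‖ ≤ c m := by
          rw [hfs m hm, norm_sub_rev]; exact hxr_diff m j hj'
        have h2 : -⟪I m (j+1), x m (j+1) - f m⟫ ≤ s m * c m := by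
          calc -⟪I m (j+1), x m (j+1) - f m⟫
              ≤ |⟪I m (j+1), x m (j+1) - f m⟫| := neg_le_abs _
            _ ≤ ‖I m (j+1)‖ * ‖x m (j+1) - f m‖ := abs_real_inner_le_norm _ _
            _ ≤ s m * c m := mul_le_mul (hI_norm m j hj') h3 (norm_nonneg _) (hs_nonneg m)
        linarith
      calc -∑ j ∈ Finset.range r, ⟪I m (j+1), w - f m⟫
          = ∑ j ∈ Finset.range r, -⟪I m (j+1), w - f m⟫ := by
            rw [← Finset.sum_neg_distrib]
        _ ≤ ∑ j ∈ Finset.range r, s m * c m := Finset.sum_le_sum hterm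
        _ = r * (s m * c m) := by rw [Finset.sum_const, Finset.card_range, nsmul_eq_mul]
    have hL : Tendsto (fun j => ⟪x₀ - x (μ j) r, w - x (μ j) r⟫) atTop
        (𝓝 ⟪x₀ - q, w - q⟫) :=
      Filter.Tendsto.inner (tendsto_const_nhds.sub hvq) (tendsto_const_nhds.sub hvq)
    have hR : Tendsto (fun j => (r:ℝ) * (s (μ j) * c (μ j))) atTop (𝓝 0) := by
      simpa using hscμ.const_mul (r:ℝ)
    refine le_of_tendsto_of_tendsto' hL hR fun j => ?_
    have h := hineq (μ j) (hμ1 j)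
    rwa [hfs (μ j) (hμ1 j)] at h
  have hdist : ∀ w ∈ ⋂ i ∈ Set.Icc 1 r, C i, dist x₀ q ≤ dist x₀ w := by
    intro w hw
    have h1 := hproj w hw
    rw [dist_eq_norm, dist_eq_norm]
    have expand := norm_sub_sq_real (x₀ - q) (w - q)
    have e : x₀ - q - (w - q) = x₀ - w := by abel
    rw [e] at expand
    nlinarith [norm_nonneg (x₀ - w), norm_nonneg (x₀ - q), sq_nonneg ‖w - q‖,
      sq_nonneg (‖x₀ - w‖ - ‖x₀ - q‖), sq_nonneg (‖x₀ - w‖ + ‖x₀ - q‖)]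
  set V : ℕ → ℝ := fun m => ‖f m - q‖^2 + 2 * W q m with hVdef
  have hVeq : ∀ m, V m = ‖x₀ - q‖^2 - S m - 2 * T m := by
    intro m
    have h := hIdent q m
    simp only [hVdef]
    linarith
  have hV_nonneg : ∀ m, 0 ≤ V m := by
    intro m
    have h1 := hW_nonneg q hqmem m
    have h2 := sq_nonneg ‖f m - q‖
    have h3 : V m = ‖f m - q‖^2 + 2 * W q m := rfl
    linarith
  have hV_anti : ∀ m m', m ≤ m' → V m' ≤ V m := by
    intro m m' hmm
    rw [hVeq m, hVeq m']
    have hS : S m ≤ S m' := by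
      apply Finset.sum_le_sum_of_subset_of_nonneg (Finset.range_subset_range.2 hmm)
      intro k _ _; exact Finset.sum_nonneg fun j _ => sq_nonneg _
    have hT : T m ≤ T m' := by
      apply Finset.sum_le_sum
      intro j hj
      apply Finset.sum_le_sum_of_subset_of_nonneg (Finset.range_subset_range.2 hmm)
      intro k _ _; exact hu_nonneg k j (Finset.mem_range.1 hj)
    linarith
  have hWbound : ∀ m, 1 ≤ m → W q m ≤ ⟪f m - x₀, q - f m⟫ + r * (s m * c m) := by
    intro m hm
    have hfI : f m - x₀ = ∑ j ∈ Finset.range r, I m (j+1) := by rw [hx0I m]; abel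
    have hterm : ∀ j ∈ Finset.range r,
        ⟪I m (j+1), q - x m (j+1)⟫ ≤ ⟪I m (j+1), q - f m⟫ + s m * c m := by
      intro j hj
      have hj' := Finset.mem_range.1 hj
      have hsplit : q - x m (j+1) = (q - f m) + (f m - x m (j+1)) := by abel
      rw [hsplit, inner_add_right]
      have h3 : ‖f m - x m (j+1)‖ ≤ c m := by rw [hfs m hm]; exact hxr_diff m j hj'
      have h5 : ⟪I m (j+1), f m - x m (j+1)⟫ ≤ s m * c m := by
        calc ⟪I m (j+1), f m - x m (j+1)⟫
            ≤ |⟪I m (j+1), f m - x m (j+1)⟫| := le_abs_self _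
          _ ≤ ‖I m (j+1)‖ * ‖f m - x m (j+1)‖ := abs_real_inner_le_norm _ _
          _ ≤ s m * c m := mul_le_mul (hI_norm m j hj') h3 (norm_nonneg _) (hs_nonneg m)
      linarith
    calc W q m ≤ ∑ j ∈ Finset.range r, (⟪I m (j+1), q - f m⟫ + s m * c m) :=
          Finset.sum_le_sum hterm
      _ = ⟪∑ j ∈ Finset.range r, I m (j+1), q - f m⟫ + r * (s m * c m) := by
          rw [Finset.sum_add_distrib, ← sum_inner, Finset.sum_const, Finset.card_range,
            nsmul_eq_mul]
      _ = ⟪f m - x₀, q - f m⟫ + r * (s m * c m) := by rw [hfI]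
  have hfμtend : Tendsto (fun j => f (μ j)) atTop (𝓝 q) := by
    refine hvq.congr fun j => (hfs (μ j) (hμ1 j)).symm
  have hWμ : Tendsto (fun j => W q (μ j)) atTop (𝓝 0) := by
    have hupper : Tendsto
        (fun j => ⟪f (μ j) - x₀, q - f (μ j)⟫ + r * (s (μ j) * c (μ j))) atTop (𝓝 0) := by
      have h2 : Tendsto (fun j => ⟪f (μ j) - x₀, q - f (μ j)⟫) atTop
          (𝓝 ⟪q - x₀, q - q⟫) :=
        Filter.Tendsto.inner (hfμtend.sub tendsto_const_nhds) (tendsto_const_nhds.sub hfμtend)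
      have h3 : (⟪q - x₀, q - q⟫ : ℝ) = 0 := by simp
      rw [h3] at h2
      have h4 : Tendsto (fun j => (r:ℝ) * (s (μ j) * c (μ j))) atTop (𝓝 0) := by
        simpa using hscμ.const_mul (r:ℝ)
      simpa using h2.add h4
    apply tendsto_of_tendsto_of_tendsto_of_le_of_le (g := fun _ => (0:ℝ))
      tendsto_const_nhds hupper
    · intro j; exact hW_nonneg q hqmem (μ j)
    · intro j; exact hWbound (μ j) (hμ1 j)
  have hfμ : Tendsto (fun j => ‖f (μ j) - q‖^2) atTop (𝓝 0) := by
    have h2 : Tendsto (fun j => f (μ j) - q) atTop (𝓝 0) := by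
      simpa using hfμtend.sub (tendsto_const_nhds (x := q))
    have h3 : Tendsto (fun j => ‖f (μ j) - q‖) atTop (𝓝 0) := by
      simpa using h2.norm
    have := h3.pow 2
    simpa using this
  have hVμ : Tendsto (fun j => V (μ j)) atTop (𝓝 0) := by
    have := hfμ.add (hWμ.const_mul 2)
    simp only [add_zero, mul_zero] at this
    refine this.congr fun j => ?_
    have h5 : V (μ j) = ‖f (μ j) - q‖^2 + 2 * W q (μ j) := rfl
    rw [h5]
  have hV0 : Tendsto V atTop (𝓝 0) := by
    rw [Metric.tendsto_atTop]
    intro ε hε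
    obtain ⟨J, hJ⟩ := (Metric.tendsto_atTop.1 hVμ) ε hε
    refine ⟨μ J, fun m hm => ?_⟩
    have h1 : V m ≤ V (μ J) := hV_anti (μ J) m hm
    have h2 := hJ J le_rfl
    rw [Real.dist_eq, sub_zero] at h2 ⊢
    rw [abs_of_nonneg (hV_nonneg m)]
    rw [abs_of_nonneg (hV_nonneg (μ J))] at h2
    linarith
  have hfq : Tendsto f atTop (𝓝 q) := by
    have h1 : Tendsto (fun m => ‖f m - q‖^2) atTop (𝓝 0) := by
      apply tendsto_of_tendsto_of_tendsto_of_le_of_le (g := fun _ => (0:ℝ))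
        tendsto_const_nhds hV0
      · intro m; exact sq_nonneg _
      · intro m
        have hWm := hW_nonneg q hqmem m
        have h3 : V m = ‖f m - q‖^2 + 2 * W q m := rfl
        show ‖f m - q‖^2 ≤ V m
        linarith
    have h2 : Tendsto (fun m => ‖f m - q‖) atTop (𝓝 0) := by
      have h3 : Tendsto (fun m => Real.sqrt (‖f m - q‖^2)) atTop (𝓝 (Real.sqrt 0)) :=
        (Real.continuous_sqrt.tendsto 0).comp h1
      simp only [Real.sqrt_zero] at h3
      exact h3.congr fun m => Real.sqrt_sq (norm_nonneg _)
    refine tendsto_iff_dist_tendsto_zero.2 ?_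
    simpa [dist_eq_norm] using h2
  refine ⟨q, hqK, hdist, ?_⟩
  have heq : ∀ᶠ m in atTop, f m = x m r := by
    filter_upwards [eventually_ge_atTop 1] with m hm
    exact hfs m hm
  exact hfq.congr' heq
end
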